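/- Let S and F be semifilters such that S is strictly subcoherent to F. Then for any separable zero-dimensional metric space X, if X satisfies B(S) (every continuous image of X in ℕ^ℕ is ≤_S-bounded), then X satisfies B(F). -/

import Mathlib

open Set Filter Cardinal

/-- A semifilter: a nonempty family of infinite subsets of ℕ closed under
almost-supersets. -/
def SemifilterOn (F : Set (Set ℕ)) : Prop :=
  F.Nonempty ∧ (∀ A ∈ F, A.Infinite) ∧
    ∀ A ∈ F, ∀ B : Set ℕ, (A \ B).Finite → B ∈ F

/-- `f ≤_F g` : the set where `f ≤ g` belongs to `F`. -/
def LeSF (F : Set (Set ℕ)) (f g : ℕ → ℕ) : Prop := {n | f n ≤ g n} ∈ F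

/-- `Y` is bounded with respect to `≤_F`. -/
def BoundedSF (F : Set (Set ℕ)) (Y : Set (ℕ → ℕ)) : Prop :=
  ∃ g : ℕ → ℕ, ∀ f ∈ Y, LeSF F f g

/-- `b(F)` : the minimal cardinality of a `≤_F`-unbounded family in `ℕ^ℕ`. -/
noncomputable def bSF (F : Set (Set ℕ)) : Cardinal :=
  sInf {c : Cardinal | ∃ Y : Set (ℕ → ℕ), #Y = c ∧ ¬ BoundedSF F Y}

/-- `f ≤* g` : eventual domination. -/
def EvLe (f g : ℕ → ℕ) : Prop := ∀ᶠ n in Filter.atTop, f n ≤ g n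

/-- The union of all blocks `[h(n), h(n+1))` that `A` meets. -/
def BlocksOf (A : Set ℕ) (h : ℕ → ℕ) : Set ℕ :=
  ⋃ n ∈ {n | (A ∩ Set.Ico (h n) (h (n + 1))).Nonempty},
    Set.Ico (h n) (h (n + 1))

/-- `S` is strictly subcoherent to `F`. -/
def StrictSubcoherent (S F : Set (Set ℕ)) : Prop :=
  ∃ h : ℕ → ℕ, StrictMono h ∧ ∀ A ∈ S, BlocksOf A h ∈ F

/-- `X` satisfies `B(G)` : every continuous image of `X` in `ℕ^ℕ` is
`≤_G`-bounded. -/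
def BddImages (G : Set (Set ℕ)) (X : Type*) [TopologicalSpace X] : Prop :=
  ∀ Ψ : X → (ℕ → ℕ), Continuous Ψ → ∃ g : ℕ → ℕ, ∀ x, LeSF G (Ψ x) g

/-- if `S` is strictly subcoherent to `F`, then `B(S)` implies
`B(F)` for every separable zero-dimensional metric space. -/
lemma cont_finset_sup {X : Type*} [TopologicalSpace X] (s : Finset ℕ)
    (Ψ : X → ℕ → ℕ) (hΨ : Continuous Ψ) :
    Continuous fun x => s.sup (Ψ x) := by
  classical
  induction s using Finset.induction with
  | empty => simpa using continuous_const
  | insert _ _ hnotmem ih =>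
      simp only [Finset.sup_insert]
      exact ((continuous_apply _).comp hΨ).sup ih

theorem stmt_10 (S F : Set (Set ℕ)) (hS : SemifilterOn S)
    (hF : SemifilterOn F) (hsub : StrictSubcoherent S F)
    (X : Type*) [MetricSpace X] [TopologicalSpace.SeparableSpace X]
    [TotallyDisconnectedSpace X]
    (hBS : BddImages S X) :
    BddImages F X := by
  obtain ⟨h, hmono, hblocks⟩ := hsub
  intro Ψ hΨ
  set Θ : X → ℕ → ℕ := fun x n => (Finset.range (h (n + 1))).sup (Ψ x) with hΘdef
  have hΘc : Continuous Θ := by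
    apply continuous_pi
    intro n
    exact cont_finset_sup _ Ψ hΨ
  obtain ⟨g, hg⟩ := hBS Θ hΘc
  refine ⟨fun m => (Finset.range (h (m + 1))).sup g, fun x => ?_⟩
  have hA : BlocksOf {n | Θ x n ≤ g n} h ∈ F := hblocks _ (hg x)
  show {m | Ψ x m ≤ (Finset.range (h (m + 1))).sup g} ∈ F
  apply hF.2.2 _ hA
  have hsubset : BlocksOf {n | Θ x n ≤ g n} h ⊆
      {m | Ψ x m ≤ (Finset.range (h (m + 1))).sup g} := by
    intro m hm
    simp only [BlocksOf, Set.mem_iUnion, Set.mem_setOf_eq] at hm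
    obtain ⟨n, ⟨k, hkA, hk⟩, hmIco⟩ := hm
    obtain ⟨hk1, hk2⟩ := hk
    obtain ⟨hm1, hm2⟩ := hmIco
    have hnhn : n ≤ h n := hmono.le_apply
    -- Ψ x m ≤ Θ x k
    have h1 : Ψ x m ≤ Θ x k := by
      apply Finset.le_sup (f := Ψ x)
      rw [Finset.mem_range]
      calc m < h (n + 1) := hm2
        _ ≤ h (k + 1) := hmono.le_iff_le.mpr (by omega)
    have h2 : Θ x k ≤ g k := hkA
    have h3 : g k ≤ (Finset.range (h (m + 1))).sup g := by
      apply Finset.le_sup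
      rw [Finset.mem_range]
      calc k < h (n + 1) := hk2
        _ ≤ h (m + 1) := hmono.le_iff_le.mpr (by omega)
    exact h1.trans (h2.trans h3)
  have : BlocksOf {n | Θ x n ≤ g n} h \
      {m | Ψ x m ≤ (Finset.range (h (m + 1))).sup g} = ∅ :=
    Set.diff_eq_empty.mpr hsubset
  exact this ▸ Set.finite_empty
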